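/- Let Σ be a signed graph, and let G and H be cospectrally rooted graphs with roots u and v (i.e., χ(G,λ) = χ(H,λ) and χ(G−u,λ) = χ(H−v,λ)). Then the signed rooted products Σ[G⁺] and Σ[H⁺] are cospectral: χ(Σ[G⁺], λ) = χ(Σ[H⁺], λ). -/
import Mathlib

open Polynomial Matrix Kronecker

set_option synthInstance.maxHeartbeats 1000000
set_option maxHeartbeats 1000000

/-- The equiv splitting off a point. -/
def splitEquiv {α : Type*} [DecidableEq α] (u : α) : {a : α // a ≠ u} ⊕ Unit ≃ α where
  toFun := Sum.elim Subtype.val (fun _ => u)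
  invFun a := if h : a = u then Sum.inr () else Sum.inl ⟨a, h⟩
  left_inv x := by
    rcases x with ⟨a, ha⟩ | ⟨⟩
    · simp [ha]
    · simp
  right_inv a := by by_cases h : a = u <;> simp [h]

/-- The diagonal entry of the adjugate is the determinant of the corresponding minor. -/
lemma adjugate_diag_eq {α : Type*} [DecidableEq α] [Fintype α] {R : Type*} [CommRing R]
    (A : Matrix α α R) (u : α) :
    A.adjugate u u = (A.submatrix (fun a : {a : α // a ≠ u} => (a : α))
      (fun a : {a : α // a ≠ u} => (a : α))).det := by
  rw [Matrix.adjugate_apply, ← Matrix.det_submatrix_equiv_self (splitEquiv u)]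
  have h : ((A.updateRow u (Pi.single u 1)).submatrix (splitEquiv u) (splitEquiv u)) =
      Matrix.fromBlocks (A.submatrix (fun a : {a : α // a ≠ u} => (a : α))
        (fun a : {a : α // a ≠ u} => (a : α))) (Matrix.of fun a _ => A a u) 0 1 := by
    ext x y
    rcases x with ⟨a, ha⟩ | ⟨⟩ <;> rcases y with ⟨b, hb⟩ | ⟨⟩
    · simp [splitEquiv, Matrix.updateRow_apply, ha]
    · simp [splitEquiv, Matrix.updateRow_apply, ha]
    · simp [splitEquiv, Matrix.updateRow_apply, Pi.single_apply, Ne.symm hb]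
    · simp [splitEquiv, Matrix.updateRow_apply, Pi.single_apply]
  rw [h, Matrix.det_fromBlocks_zero₂₁, Matrix.det_one, mul_one]

/-- Key determinant computation for the rooted product. -/
lemma key_det {n m : ℕ} {K : Type*} [Field K]
    (D : Matrix (Fin m) (Fin m) K) (A0 : Matrix (Fin n) (Fin n) K) (u : Fin m)
    (hD : D.det ≠ 0) :
    ((1 : Matrix (Fin n) (Fin n) K) ⊗ₖ D
        - A0 ⊗ₖ (Matrix.of fun a b : Fin m => if a = u ∧ b = u then (1:K) else 0)).det
      = (D.det • (1 : Matrix (Fin n) (Fin n) K) - (D.adjugate u u) • A0).det := by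
  set E : Matrix (Fin m) (Fin m) K := Matrix.of fun a b => if a = u ∧ b = u then (1:K) else 0
  have hDu : IsUnit D.det := isUnit_iff_ne_zero.mpr hD
  have hDinv : D * D⁻¹ = 1 := Matrix.mul_nonsing_inv D hDu
  set U : Matrix (Fin n × Fin m) (Fin n) K := Matrix.of fun x j => A0 x.1 j * D⁻¹ x.2 u
  set V : Matrix (Fin n) (Fin n × Fin m) K :=
    Matrix.of fun j y => if y.1 = j ∧ y.2 = u then (1:K) else 0
  have hUV : U * V = A0 ⊗ₖ (D⁻¹ * E) := by
    ext ⟨i, a⟩ ⟨j, b⟩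
    simp only [Matrix.mul_apply, U, V, Matrix.of_apply, Matrix.kroneckerMap_apply, E]
    by_cases hb : b = u
    · simp [hb, ite_and, mul_ite, mul_one, mul_zero, Finset.sum_ite_eq, Finset.sum_ite_eq']
    · simp [hb]
  have hfac : (1 : Matrix (Fin n) (Fin n) K) ⊗ₖ D - A0 ⊗ₖ E
      = ((1 : Matrix (Fin n) (Fin n) K) ⊗ₖ D) * (1 - U * V) := by
    rw [mul_sub, mul_one]
    congr 1
    rw [hUV, ← Matrix.mul_kronecker_mul, Matrix.one_mul, ← Matrix.mul_assoc, hDinv,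
      Matrix.one_mul]
  have hVU : V * U = (D⁻¹ u u) • A0 := by
    ext j k
    simp only [Matrix.mul_apply, U, V, Matrix.of_apply, Matrix.smul_apply, smul_eq_mul,
      Fintype.sum_prod_type]
    simp [ite_and, ite_mul, one_mul, zero_mul, Finset.sum_ite_eq, Finset.sum_ite_eq']
    ring
  have hdet1 : (1 - U * V).det = (1 - V * U).det := by
    have := Matrix.det_one_add_mul_comm (-U) V
    simpa [sub_eq_add_neg, Matrix.neg_mul, Matrix.mul_neg] using this
  rw [hfac, Matrix.det_mul, Matrix.det_kronecker, Matrix.det_one, one_pow, one_mul, hdet1, hVU]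
  have hsm : D.det • ((1 : Matrix (Fin n) (Fin n) K) - D⁻¹ u u • A0)
      = D.det • (1 : Matrix (Fin n) (Fin n) K) - (D.adjugate u u) • A0 := by
    rw [smul_sub, smul_smul]
    congr 2
    rw [Matrix.inv_def, Matrix.smul_apply, Ring.inverse_eq_inv, smul_eq_mul]
    field_simp
  rw [← hsm, Matrix.det_smul, Fintype.card_fin]

noncomputable def phiK : ℝ[X] →+* RatFunc ℝ := algebraMap ℝ[X] (RatFunc ℝ)

lemma charpoly_map_ratfunc {ι : Type*} [Fintype ι] [DecidableEq ι] (M : Matrix ι ι ℝ) :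
    phiK M.charpoly
      = ((phiK X) • (1 : Matrix ι ι (RatFunc ℝ))
          - M.map (fun r => phiK (C r))).det := by
  rw [Matrix.charpoly, RingHom.map_det]
  have h : (charmatrix M).map phiK
      = (phiK X) • (1 : Matrix ι ι (RatFunc ℝ)) - M.map (fun r => phiK (C r)) := by
    ext i j
    by_cases h : i = j <;>
      simp [h, Matrix.charmatrix_apply, Matrix.map_apply, Matrix.smul_apply, Matrix.one_apply,
        Matrix.diagonal_apply, map_sub]
  rw [RingHom.mapMatrix_apply, h]

/-- The rooted product formula: the image of the characteristic polynomial of the rooted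
product under the embedding into rational functions. -/
lemma charpoly_rooted {n m : ℕ} (AS : Matrix (Fin n) (Fin n) ℝ)
    (AG : Matrix (Fin m) (Fin m) ℝ) (u : Fin m)
    (RG : Matrix (Fin n × Fin m) (Fin n × Fin m) ℝ)
    (hRG : ∀ x y : Fin n × Fin m, RG x y =
      if x.1 = y.1 then AG x.2 y.2
      else if x.2 = u ∧ y.2 = u then AS x.1 y.1 else 0) :
    phiK RG.charpoly
      = ((phiK AG.charpoly) • (1 : Matrix (Fin n) (Fin n) (RatFunc ℝ))
          - (phiK (AG.submatrix (fun a : {a : Fin m // a ≠ u} => (a : Fin m))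
              (fun a : {a : Fin m // a ≠ u} => (a : Fin m))).charpoly)
            • ((Matrix.of fun i j : Fin n => if i = j then (0:ℝ) else AS i j).map
                (fun r => phiK (C r)))).det := by
  set K := RatFunc ℝ
  set ψ : ℝ → K := fun r => phiK (C r) with hψ
  have hψ0 : ψ 0 = 0 := by simp [hψ]
  set A0K : Matrix (Fin n) (Fin n) K :=
    (Matrix.of fun i j : Fin n => if i = j then (0:ℝ) else AS i j).map ψ with hA0K
  set DG : Matrix (Fin m) (Fin m) K := (phiK X) • 1 - AG.map ψ with hDG
  have hDGdet : DG.det = phiK AG.charpoly := (charpoly_map_ratfunc AG).symm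
  have hinj : Function.Injective phiK := IsFractionRing.injective ℝ[X] (RatFunc ℝ)
  have hDGne : DG.det ≠ 0 := by
    rw [hDGdet]
    intro h
    exact (Matrix.charpoly_monic AG).ne_zero (hinj (by simpa using h))
  have hsplit : (phiK X) • (1 : Matrix (Fin n × Fin m) (Fin n × Fin m) K) - RG.map ψ
      = (1 : Matrix (Fin n) (Fin n) K) ⊗ₖ DG
        - A0K ⊗ₖ (Matrix.of fun a b : Fin m => if a = u ∧ b = u then (1:K) else 0) := by
    ext ⟨i, a⟩ ⟨j, b⟩
    simp only [Matrix.sub_apply, Matrix.smul_apply, Matrix.one_apply, Matrix.map_apply,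
      Matrix.kroneckerMap_apply, hDG, hA0K, Matrix.of_apply, Prod.mk.injEq, smul_eq_mul,
      mul_ite, mul_one, mul_zero, hRG]
    by_cases hij : i = j
    · subst hij
      by_cases hab : a = b <;> simp [hab, hψ0] <;> ring
    · rcases Decidable.em (a = u ∧ b = u) with hau | hau
      · obtain ⟨h1, h2⟩ := hau
        simp [hij, h1, h2, hψ0]
      · simp [hij, hau, hψ0]
  have hmain := key_det DG A0K u hDGne
  have hsub : DG.adjugate u u
      = phiK (AG.submatrix (fun a : {a : Fin m // a ≠ u} => (a : Fin m))
          (fun a : {a : Fin m // a ≠ u} => (a : Fin m))).charpoly := by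
    rw [adjugate_diag_eq DG u]
    have h2 : DG.submatrix (fun a : {a : Fin m // a ≠ u} => (a : Fin m))
          (fun a : {a : Fin m // a ≠ u} => (a : Fin m))
        = (phiK X) • (1 : Matrix {a : Fin m // a ≠ u} {a : Fin m // a ≠ u} K)
          - (AG.submatrix (fun a : {a : Fin m // a ≠ u} => (a : Fin m))
              (fun a : {a : Fin m // a ≠ u} => (a : Fin m))).map ψ := by
      ext ⟨a, ha⟩ ⟨b, hb⟩
      by_cases hab : a = b <;>
        simp [hDG, hab, Matrix.one_apply, Subtype.ext_iff]
    rw [h2, ← charpoly_map_ratfunc]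
  rw [charpoly_map_ratfunc RG, hsplit, hmain, hDGdet, hsub]

/-- If G and H are cospectrally rooted graphs with roots u, v, then the signed
rooted products Σ[G⁺] and Σ[H⁺] are cospectral. -/
theorem rooted_product_cospectral (n m : ℕ)
    (AS : Matrix (Fin n) (Fin n) ℝ)
    (AG AH : Matrix (Fin m) (Fin m) ℝ)
    (hGsym : AG.IsSymm) (hHsym : AH.IsSymm)
    (hGval : ∀ a b, AG a b = 0 ∨ AG a b = 1) (hHval : ∀ a b, AH a b = 0 ∨ AH a b = 1)
    (hGdiag : ∀ a, AG a a = 0) (hHdiag : ∀ a, AH a a = 0)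
    (u v : Fin m)
    (hcos : AG.charpoly = AH.charpoly)
    (hcosdel : (AG.submatrix (fun a : {a : Fin m // a ≠ u} => (a : Fin m))
        (fun a : {a : Fin m // a ≠ u} => (a : Fin m))).charpoly
      = (AH.submatrix (fun a : {a : Fin m // a ≠ v} => (a : Fin m))
        (fun a : {a : Fin m // a ≠ v} => (a : Fin m))).charpoly)
    (RG RH : Matrix (Fin n × Fin m) (Fin n × Fin m) ℝ)
    (hRG : ∀ x y : Fin n × Fin m, RG x y =
      if x.1 = y.1 then AG x.2 y.2
      else if x.2 = u ∧ y.2 = u then AS x.1 y.1 else 0)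
    (hRH : ∀ x y : Fin n × Fin m, RH x y =
      if x.1 = y.1 then AH x.2 y.2
      else if x.2 = v ∧ y.2 = v then AS x.1 y.1 else 0) :
    RG.charpoly = RH.charpoly := by
  have hinj : Function.Injective phiK := IsFractionRing.injective ℝ[X] (RatFunc ℝ)
  apply hinj
  rw [charpoly_rooted AS AG u RG hRG, charpoly_rooted AS AH v RH hRH, hcos, hcosdel]
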